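/- Consider a k-step additive LMM u_n = ∑_{j=0}^{k-1} α_j u_{n−k+j} + Δt ∑_{j=0}^{k} (β_j F(u_{n−k+j}) + β̂_j F̂(u_{n−k+j})) with ∑_{j=0}^{k-1} α_j = 1. Suppose F satisfies ‖u + Δt F(u)‖ ≤ ‖u‖ for 0 ≤ Δt ≤ Δt_FE, F̂ satisfies ‖u + Δt F̂(u)‖ ≤ ‖u‖ for 0 ≤ Δt ≤ Δ̂t_FE, and the SSP conditions hold: β_j, β̂_j ≥ 0 and α_j − C β_j − Ĉ β̂_j ≥ 0 for j = 0,...,k−1, with C, Ĉ ≥ 0. Then under the step-size restriction Δt ≤ min{C Δt_FE, Ĉ Δ̂t_FE}, the numerical solution satisfies ‖u_n‖ ≤ max{‖u_{n−1}‖, ..., ‖u_{n−k}‖}. -/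

import Mathlib

/-- Monotonicity of SSP additive linear multistep methods with different forward Euler
conditions for the two operators. -/
theorem stmt_16 (m k : ℕ) (hk : 0 < k) (N : (Fin m → ℝ) → ℝ)
    (hsub : ∀ u v : Fin m → ℝ, N (u + v) ≤ N u + N v)
    (hhom : ∀ (c : ℝ) (u : Fin m → ℝ), 0 ≤ c → N (c • u) = c * N u)
    (F Fh : (Fin m → ℝ) → (Fin m → ℝ))
    (ΔtFE ΔthFE : ℝ) (hΔtFE : 0 < ΔtFE) (hΔthFE : 0 < ΔthFE)
    (hF : ∀ (u : Fin m → ℝ) (τ : ℝ), 0 ≤ τ → τ ≤ ΔtFE → N (u + τ • F u) ≤ N u)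
    (hFh : ∀ (u : Fin m → ℝ) (τ : ℝ), 0 ≤ τ → τ ≤ ΔthFE → N (u + τ • Fh u) ≤ N u)
    (α : Fin k → ℝ) (β βh : Fin (k + 1) → ℝ)
    (hconsist : ∑ j, α j = 1)
    (C Ch : ℝ) (hC : 0 ≤ C) (hCh : 0 ≤ Ch)
    (hβ : ∀ j, 0 ≤ β j) (hβh : ∀ j, 0 ≤ βh j)
    (hssp : ∀ j : Fin k, 0 ≤ α j - C * β j.castSucc - Ch * βh j.castSucc)
    (Δt : ℝ) (hΔt0 : 0 ≤ Δt) (hΔt : Δt ≤ min (C * ΔtFE) (Ch * ΔthFE))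
    (uprev : Fin k → (Fin m → ℝ)) (un : Fin m → ℝ)
    (hstep : un = ∑ j : Fin k, α j • uprev j +
      Δt • ((∑ j : Fin k, (β j.castSucc • F (uprev j) + βh j.castSucc • Fh (uprev j))) +
        (β (Fin.last k) • F un + βh (Fin.last k) • Fh un))) :
    N un ≤ Finset.univ.sup' (Finset.univ_nonempty_iff.mpr ⟨⟨0, hk⟩⟩)
      (fun j : Fin k => N (uprev j)) := by
  have hN0 : N 0 = 0 := by
    have := hhom 0 0 le_rfl
    simpa using this
  have hsum : ∀ (f : Fin k → (Fin m → ℝ)),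
      N (∑ j : Fin k, f j) ≤ ∑ j : Fin k, N (f j) :=
    fun f => Finset.le_sum_of_subadditive N hN0.le hsub _ _
  set M := Finset.univ.sup' (Finset.univ_nonempty_iff.mpr ⟨⟨0, hk⟩⟩)
      (fun j : Fin k => N (uprev j)) with hMdef
  have hMle : ∀ j : Fin k, N (uprev j) ≤ M :=
    fun j => Finset.le_sup' (fun i : Fin k => N (uprev i)) (Finset.mem_univ j)
  have hα : ∀ j : Fin k, 0 ≤ α j := by
    intro j
    have h1 := hssp j
    have h2 := mul_nonneg hC (hβ j.castSucc)
    have h3 := mul_nonneg hCh (hβh j.castSucc)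
    linarith
  rcases eq_or_lt_of_le hΔt0 with h0 | hpos
  · -- Δt = 0
    rw [← h0] at hstep
    simp only [zero_smul, add_zero] at hstep
    calc N un = N (∑ j : Fin k, α j • uprev j) := by rw [hstep]
      _ ≤ ∑ j : Fin k, N (α j • uprev j) := hsum _
      _ = ∑ j : Fin k, α j * N (uprev j) := by
          exact Finset.sum_congr rfl fun j _ => hhom _ _ (hα j)
      _ ≤ ∑ j : Fin k, α j * M := by
          exact Finset.sum_le_sum fun j _ =>
            mul_le_mul_of_nonneg_left (hMle j) (hα j)
      _ = M := by rw [← Finset.sum_mul, hconsist, one_mul]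
  · have hCpos : 0 < C := by
      rcases hC.lt_or_eq with h | h
      · exact h
      · exfalso
        have := le_trans hΔt (min_le_left _ _)
        rw [← h, zero_mul] at this
        linarith
    have hChpos : 0 < Ch := by
      rcases hCh.lt_or_eq with h | h
      · exact h
      · exfalso
        have := le_trans hΔt (min_le_right _ _)
        rw [← h, zero_mul] at this
        linarith
    set a := Δt / C with hadef
    set ah := Δt / Ch with hahdef
    have ha0 : 0 ≤ a := div_nonneg hΔt0 hC
    have hah0 : 0 ≤ ah := div_nonneg hΔt0 hCh
    have ha : a ≤ ΔtFE := by
      rw [hadef, div_le_iff₀ hCpos]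
      have := le_trans hΔt (min_le_left _ _)
      linarith [this]
    have hah : ah ≤ ΔthFE := by
      rw [hahdef, div_le_iff₀ hChpos]
      have := le_trans hΔt (min_le_right _ _)
      linarith [this]
    have hCa : C * a = Δt := by
      rw [hadef, mul_comm, div_mul_cancel₀ _ hCpos.ne']
    have hCha : Ch * ah = Δt := by
      rw [hahdef, mul_comm, div_mul_cancel₀ _ hChpos.ne']
    set s := C * β (Fin.last k) + Ch * βh (Fin.last k) with hsdef
    have hs0 : 0 ≤ s :=
      add_nonneg (mul_nonneg hC (hβ _)) (mul_nonneg hCh (hβh _))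
    have key : ∀ j : Fin k,
        (α j - C * β j.castSucc - Ch * βh j.castSucc) • uprev j
          + ((C * β j.castSucc) • (uprev j + a • F (uprev j))
            + (Ch * βh j.castSucc) • (uprev j + ah • Fh (uprev j)))
        = α j • uprev j
          + Δt • (β j.castSucc • F (uprev j) + βh j.castSucc • Fh (uprev j)) := by
      intro j
      funext x
      simp only [Pi.add_apply, Pi.smul_apply, smul_eq_mul]
      linear_combination (β j.castSucc * F (uprev j) x) * hCa
        + (βh j.castSucc * Fh (uprev j) x) * hCha
    have key2 :
        (C * β (Fin.last k)) • (un + a • F un)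
          + (Ch * βh (Fin.last k)) • (un + ah • Fh un)
        = s • un + Δt • (β (Fin.last k) • F un + βh (Fin.last k) • Fh un) := by
      funext x
      simp only [Pi.add_apply, Pi.smul_apply, smul_eq_mul, hsdef]
      linear_combination (β (Fin.last k) * F un x) * hCa
        + (βh (Fin.last k) * Fh un x) * hCha
    have hvec : (1 + s) • un
        = (∑ j : Fin k, ((α j - C * β j.castSucc - Ch * βh j.castSucc) • uprev j
            + ((C * β j.castSucc) • (uprev j + a • F (uprev j))
              + (Ch * βh j.castSucc) • (uprev j + ah • Fh (uprev j)))))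
          + ((C * β (Fin.last k)) • (un + a • F un)
            + (Ch * βh (Fin.last k)) • (un + ah • Fh un)) := by
      rw [Finset.sum_congr rfl fun j _ => key j, key2]
      calc (1 + s) • un = un + s • un := by rw [add_smul, one_smul]
        _ = (∑ j : Fin k, α j • uprev j +
              Δt • ((∑ j : Fin k, (β j.castSucc • F (uprev j)
                  + βh j.castSucc • Fh (uprev j)))
                + (β (Fin.last k) • F un + βh (Fin.last k) • Fh un))) + s • un := by
            rw [← hstep]
        _ = (∑ j : Fin k, (α j • uprev j
              + Δt • (β j.castSucc • F (uprev j) + βh j.castSucc • Fh (uprev j))))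
            + (s • un + Δt • (β (Fin.last k) • F un + βh (Fin.last k) • Fh un)) := by
            simp only [smul_add, Finset.smul_sum, Finset.sum_add_distrib]
            abel
    have hb : (1 + s) * N un ≤ M + s * N un := by
      have e1 : N (∑ j : Fin k, ((α j - C * β j.castSucc - Ch * βh j.castSucc) • uprev j
            + ((C * β j.castSucc) • (uprev j + a • F (uprev j))
              + (Ch * βh j.castSucc) • (uprev j + ah • Fh (uprev j))))) ≤ M := by
        calc N (∑ j : Fin k, _) ≤ ∑ j : Fin k,
              N ((α j - C * β j.castSucc - Ch * βh j.castSucc) • uprev j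
                + ((C * β j.castSucc) • (uprev j + a • F (uprev j))
                  + (Ch * βh j.castSucc) • (uprev j + ah • Fh (uprev j)))) := hsum _
          _ ≤ ∑ j : Fin k, α j * M := by
              refine Finset.sum_le_sum fun j _ => ?_
              have t1 : N ((α j - C * β j.castSucc - Ch * βh j.castSucc) • uprev j)
                  ≤ (α j - C * β j.castSucc - Ch * βh j.castSucc) * M := by
                rw [hhom _ _ (hssp j)]
                exact mul_le_mul_of_nonneg_left (hMle j) (hssp j)
              have t2 : N ((C * β j.castSucc) • (uprev j + a • F (uprev j)))
                  ≤ (C * β j.castSucc) * M := by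
                rw [hhom _ _ (mul_nonneg hC (hβ _))]
                exact mul_le_mul_of_nonneg_left
                  (le_trans (hF (uprev j) a ha0 ha) (hMle j))
                  (mul_nonneg hC (hβ _))
              have t3 : N ((Ch * βh j.castSucc) • (uprev j + ah • Fh (uprev j)))
                  ≤ (Ch * βh j.castSucc) * M := by
                rw [hhom _ _ (mul_nonneg hCh (hβh _))]
                exact mul_le_mul_of_nonneg_left
                  (le_trans (hFh (uprev j) ah hah0 hah) (hMle j))
                  (mul_nonneg hCh (hβh _))
              have := le_trans (hsub _ _)
                (add_le_add t1 (le_trans (hsub _ _) (add_le_add t2 t3)))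
              linarith
          _ = M := by rw [← Finset.sum_mul, hconsist, one_mul]
      have e2 : N ((C * β (Fin.last k)) • (un + a • F un)
            + (Ch * βh (Fin.last k)) • (un + ah • Fh un)) ≤ s * N un := by
        have t2 : N ((C * β (Fin.last k)) • (un + a • F un))
            ≤ (C * β (Fin.last k)) * N un := by
          rw [hhom _ _ (mul_nonneg hC (hβ _))]
          exact mul_le_mul_of_nonneg_left (hF un a ha0 ha) (mul_nonneg hC (hβ _))
        have t3 : N ((Ch * βh (Fin.last k)) • (un + ah • Fh un))
            ≤ (Ch * βh (Fin.last k)) * N un := by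
          rw [hhom _ _ (mul_nonneg hCh (hβh _))]
          exact mul_le_mul_of_nonneg_left (hFh un ah hah0 hah) (mul_nonneg hCh (hβh _))
        have := le_trans (hsub _ _) (add_le_add t2 t3)
        rw [hsdef]
        linarith
      calc (1 + s) * N un = N ((1 + s) • un) := (hhom _ _ (by linarith)).symm
        _ = _ := by rw [hvec]
        _ ≤ _ + _ := hsub _ _
        _ ≤ M + s * N un := add_le_add e1 e2
    have hb' : N un + s * N un ≤ M + s * N un := by
      rw [add_mul, one_mul] at hb
      linarith
    linarith
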